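/- For n ≥ 1 define the polyanalytic Fock kernel of order n by K_n(z,w) = exp(z·conj(w)) · Σ_{k=0}^{n−1} ((−1)^k / k!) · (n choose (k+1)) · |z−w|^{2k}. Then for all z, w ∈ ℂ the series Σ_{n=1}^{∞} K_n(z,w) / 2^{n+1} converges and equals G(z,w)·K(z,w), where G(z,w) = exp(z·conj(w) − |z|² − |w|²) and K(z,w) = exp(z·conj(w) + conj(z)·w). -/

import Mathlib

open Complex ComplexConjugate

/-- The reproducing kernel of the polyanalytic Fock space of order `n ≥ 1`:
`K_n(z,w) = exp(z·conj w) · Σ_{k=0}^{n−1} ((−1)^k/k!) · C(n,k+1) · |z−w|^{2k}`. -/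
noncomputable def polyFockKernel (n : ℕ) (z w : ℂ) : ℂ :=
  Complex.exp (z * conj w) *
    ∑ k ∈ Finset.range n,
      ((-1 : ℂ) ^ k / (k.factorial : ℂ)) * (n.choose (k + 1) : ℂ) *
        ((‖z - w‖ : ℂ)) ^ (2 * k)

noncomputable def auxA (x : ℝ) (k : ℕ) : ℂ :=
  (-1 : ℂ) ^ k / (k.factorial : ℂ) * (x : ℂ) ^ (2 * k)

noncomputable def auxF (x : ℝ) (p : ℕ × ℕ) : ℂ :=
  auxA x p.1 * (((p.2 + 1).choose (p.1 + 1) : ℂ)) / 2 ^ (p.2 + 2)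

/-- `Σ_{n≥0} C(n+1, k+1) / 2^(n+2) = 1` in any `RCLike` field. -/
lemma aux_hasSum_choose {𝕜 : Type*} [RCLike 𝕜] (k : ℕ) :
    HasSum (fun n : ℕ => (((n + 1).choose (k + 1) : 𝕜)) / 2 ^ (n + 2)) 1 := by
  have h2 : ‖(2 : 𝕜)⁻¹‖ < 1 := by
    rw [norm_inv]
    have : ‖(2 : 𝕜)‖ = 2 := by
      simp
    rw [this]; norm_num
  have key : HasSum (fun n : ℕ => (((n + (k + 1)).choose (k + 1) : 𝕜)) * (2 : 𝕜)⁻¹ ^ n *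
      (2 : 𝕜)⁻¹ ^ (k + 2)) 1 := by
    have h := (hasSum_choose_mul_geometric_of_norm_lt_one (k + 1) h2).mul_right
      ((2 : 𝕜)⁻¹ ^ (k + 2))
    convert h using 1
    · rfl
    have h12 : (1 - (2 : 𝕜)⁻¹) = 2⁻¹ := by
      have h2ne : (2 : 𝕜) ≠ 0 := two_ne_zero
      field_simp
      ring
    rw [h12, one_div, ← inv_pow, inv_inv]
    rw [← mul_pow]
    norm_num
  have hshift : (fun n : ℕ => (((n + (k + 1)).choose (k + 1) : 𝕜)) * (2 : 𝕜)⁻¹ ^ n *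
      (2 : 𝕜)⁻¹ ^ (k + 2)) =
      (fun n : ℕ => (((n + k + 1).choose (k + 1) : 𝕜)) / 2 ^ (n + k + 2)) := by
    funext n
    rw [show n + (k + 1) = n + k + 1 from by omega, div_eq_mul_inv, ← inv_pow,
      show n + k + 2 = n + (k + 2) from by omega, pow_add, mul_assoc]
    ring
  rw [hshift] at key
  have := (hasSum_nat_add_iff (f := fun n : ℕ => (((n + 1).choose (k + 1) : 𝕜)) / 2 ^ (n + 2))
    k).mp key
  have hzero : ∑ i ∈ Finset.range k, (((i + 1).choose (k + 1) : 𝕜)) / 2 ^ (i + 2) = 0 := by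
    apply Finset.sum_eq_zero
    intro i hi
    rw [Finset.mem_range] at hi
    rw [Nat.choose_eq_zero_of_lt (by omega)]
    simp
  rwa [hzero, add_zero] at this

lemma auxF_fiber (x : ℝ) (k : ℕ) : HasSum (fun n => auxF x (k, n)) (auxA x k) := by
  have := (aux_hasSum_choose (𝕜 := ℂ) k).mul_left (auxA x k)
  rw [mul_one] at this
  exact this.congr_fun fun n => by rw [auxF, mul_div_assoc]

lemma auxF_norm {x : ℝ} (hx0 : 0 ≤ x) (k n : ℕ) : ‖auxF x (k, n)‖ =
    x ^ (2 * k) / (k.factorial : ℝ) * ((((n + 1).choose (k + 1) : ℝ)) / 2 ^ (n + 2)) := by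
  have h1 : ‖auxA x k‖ = x ^ (2 * k) / (k.factorial : ℝ) := by
    rw [auxA, norm_mul, norm_div, norm_pow, norm_pow, Complex.norm_real,
      Real.norm_eq_abs, _root_.abs_of_nonneg hx0, Complex.norm_natCast]
    simp only [norm_neg, norm_one, one_pow, one_mul]
    ring
  rw [auxF]
  simp only [norm_div, norm_mul, h1, Complex.norm_natCast]
  have h2 : ‖(2 : ℂ) ^ (n + 2)‖ = (2 : ℝ) ^ (n + 2) := by
    rw [norm_pow]; norm_num
  rw [h2]
  ring

lemma auxF_norm_fiber {x : ℝ} (hx0 : 0 ≤ x) (k : ℕ) :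
    HasSum (fun n => ‖auxF x (k, n)‖) (x ^ (2 * k) / (k.factorial : ℝ)) := by
  have := (aux_hasSum_choose (𝕜 := ℝ) k).mul_left (x ^ (2 * k) / (k.factorial : ℝ))
  rw [mul_one] at this
  exact this.congr_fun fun n => by rw [auxF_norm hx0 k n]

lemma auxF_summable {x : ℝ} (hx0 : 0 ≤ x) : Summable (auxF x) := by
  apply Summable.of_norm
  have hpos : 0 ≤ fun p : ℕ × ℕ => ‖auxF x p‖ := fun p => norm_nonneg _
  rw [summable_prod_of_nonneg hpos]
  constructor
  · exact fun k => (auxF_norm_fiber hx0 k).summable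
  · apply Summable.congr (f := fun k : ℕ => x ^ (2 * k) / (k.factorial : ℝ))
    · exact (Real.summable_pow_div_factorial (x ^ 2)).congr fun k => by rw [← pow_mul]
    · exact fun k => ((auxF_norm_fiber hx0 k).tsum_eq).symm

lemma auxA_hasSum (x : ℝ) : HasSum (auxA x) (Complex.exp (-((x : ℂ) ^ 2))) := by
  have h := NormedSpace.expSeries_div_hasSum_exp (-((x : ℂ) ^ 2))
  rw [← Complex.exp_eq_exp_ℂ] at h
  apply h.congr_fun
  intro k
  rw [auxA, neg_pow ((x : ℂ) ^ 2), ← pow_mul]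
  ring

lemma auxF_hasSum {x : ℝ} (hx0 : 0 ≤ x) :
    HasSum (auxF x) (Complex.exp (-((x : ℂ) ^ 2))) := by
  have h1 : HasSum (auxF x) (∑' p, auxF x p) := (auxF_summable hx0).hasSum
  have h2 : HasSum (auxA x) (∑' p, auxF x p) := h1.prod_fiberwise (auxF_fiber x)
  rw [(auxA_hasSum x).unique h2]
  exact h1


set_option maxHeartbeats 1000000 in
lemma auxF_hasSum_rows {x : ℝ} (hx0 : 0 ≤ x) :
    HasSum (fun n : ℕ => ∑ k ∈ Finset.range (n + 1), auxF x (k, n))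
      (Complex.exp (-((x : ℂ) ^ 2))) := by
  have hswap : HasSum (fun p : ℕ × ℕ => auxF x (p.2, p.1)) (Complex.exp (-((x : ℂ) ^ 2))) :=
    ((Equiv.prodComm ℕ ℕ).hasSum_iff).mpr (auxF_hasSum hx0)
  apply hswap.prod_fiberwise
  intro n
  apply hasSum_sum_of_ne_finset_zero
  intro k hk
  rw [Finset.mem_range, not_lt] at hk
  rw [auxF]
  simp only
  rw [Nat.choose_eq_zero_of_lt (by omega)]
  simp

/-- For all `z, w ∈ ℂ` the series `Σ_{n=1}^∞ K_n(z,w)/2^{n+1}` converges and its sum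
is `G(z,w)·K(z,w)`, where `G(z,w) = exp(z·conj w − |z|² − |w|²)` and
`K(z,w) = exp(z·conj w + conj z·w)`. -/
theorem hasSum_polyFockKernel_div_two_pow (z w : ℂ) :
    HasSum (fun n : ℕ => polyFockKernel (n + 1) z w / 2 ^ (n + 2))
      (Complex.exp (z * conj w - (‖z‖ : ℂ) ^ 2 - (‖w‖ : ℂ) ^ 2) *
        Complex.exp (z * conj w + conj z * w)) := by
  have final := (auxF_hasSum_rows (x := ‖z - w‖) (norm_nonneg _)).mul_left
    (Complex.exp (z * conj w))
  convert final using 1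
  · rfl
  · funext n
    rw [polyFockKernel, Finset.mul_sum, Finset.mul_sum, Finset.sum_div]
    apply Finset.sum_congr rfl
    intro k _
    rw [auxF, auxA]
    simp only
    ring
  · rw [← Complex.exp_add, ← Complex.exp_add]
    congr 1
    have hsq : ∀ u : ℂ, ((‖u‖ : ℂ)) ^ 2 = u * conj u := by
      intro u
      rw [Complex.mul_conj]
      norm_cast
      rw [← Complex.sq_norm]
    rw [hsq z, hsq w, hsq (z - w), map_sub]
    ring
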